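/- Let C be a nonempty closed subset of a Euclidean space X, let L be an affine subspace containing C, and let λ ∈ ℝ. Then for every x ∈ X, d_C²(P_L^λ x) = d_C²(P_L x) + (1 − λ)² d_L²(x), where P_L^λ := (1 − λ) Id + λ P_L. In particular (λ = 0), d_C²(x) = d_C²(P_L x) + d_L²(x). -/

import Mathlib

open Metric EuclideanGeometry

private lemma gDR_aux {X : Type*} [NormedAddCommGroup X] [InnerProductSpace ℝ X]
    [FiniteDimensional ℝ X]
    (C : Set X) (hCne : C.Nonempty) (hCcl : IsClosed C)
    (L : AffineSubspace ℝ X) [Nonempty L] (hCL : C ⊆ (L : Set X)) (lam : ℝ) (x : X) :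
    (Metric.infDist ((1 - lam) • x + lam • (EuclideanGeometry.orthogonalProjection L x : X)) C) ^ 2
        = (Metric.infDist ((EuclideanGeometry.orthogonalProjection L x : X)) C) ^ 2
          + (1 - lam) ^ 2 * dist x (EuclideanGeometry.orthogonalProjection L x : X) ^ 2 := by
  set p : X := (EuclideanGeometry.orthogonalProjection L x : X) with hp
  set z : X := (1 - lam) • x + lam • p with hz
  have hpL : p ∈ L := (EuclideanGeometry.orthogonalProjection L x).2
  have hxp : x - p ∈ L.directionᗮ := by
    simpa [hp] using vsub_orthogonalProjection_mem_direction_orthogonal L x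
  have key : ∀ c ∈ C, dist z c ^ 2 = dist p c ^ 2 + (1 - lam) ^ 2 * dist x p ^ 2 := by
    intro c hc
    have hcL : c ∈ L := hCL hc
    have hpc : p - c ∈ L.direction := AffineSubspace.vsub_mem_direction hpL hcL
    have horth : inner ℝ (p - c) ((1 - lam) • (x - p)) = (0 : ℝ) := by
      rw [inner_smul_right]
      have := hxp _ hpc
      simp [this]
    have hzc : z - c = (p - c) + (1 - lam) • (x - p) := by
      rw [hz]
      ring_nf
      module
    rw [dist_eq_norm, dist_eq_norm, dist_eq_norm, hzc]
    rw [norm_add_sq_real, horth]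
    rw [norm_smul, Real.norm_eq_abs]
    rw [mul_pow, sq_abs]
    ring
  obtain ⟨c₀, hc₀C, hc₀⟩ := hCcl.exists_infDist_eq_dist hCne p
  have hzinf : Metric.infDist z C = dist z c₀ := by
    refine le_antisymm (Metric.infDist_le_dist_of_mem hc₀C) ?_
    rw [← not_lt, Metric.infDist_lt_iff hCne]
    push_neg
    intro c hc
    have h1 := key c₀ hc₀C
    have h2 := key c hc
    have hle : dist p c₀ ≤ dist p c := hc₀ ▸ Metric.infDist_le_dist_of_mem hc
    have hsq : dist z c₀ ^ 2 ≤ dist z c ^ 2 := by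
      rw [h1, h2]
      have := pow_le_pow_left₀ dist_nonneg hle 2
      linarith
    exact (pow_le_pow_iff_left₀ dist_nonneg dist_nonneg two_ne_zero).mp hsq
  rw [hzinf, key c₀ hc₀C, hc₀]

theorem gDR_aff_dist {X : Type*} [NormedAddCommGroup X] [InnerProductSpace ℝ X]
    [FiniteDimensional ℝ X]
    (C : Set X) (hCne : C.Nonempty) (hCcl : IsClosed C)
    (L : AffineSubspace ℝ X) [Nonempty L] (hCL : C ⊆ (L : Set X)) (lam : ℝ) (x : X) :
    (Metric.infDist ((1 - lam) • x + lam • (EuclideanGeometry.orthogonalProjection L x : X)) C) ^ 2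
        = (Metric.infDist ((EuclideanGeometry.orthogonalProjection L x : X)) C) ^ 2
          + (1 - lam) ^ 2 * (Metric.infDist x (L : Set X)) ^ 2 ∧
      (Metric.infDist x C) ^ 2
        = (Metric.infDist ((EuclideanGeometry.orthogonalProjection L x : X)) C) ^ 2
          + (Metric.infDist x (L : Set X)) ^ 2 := by
  set p : X := (EuclideanGeometry.orthogonalProjection L x : X) with hp
  have hpL : p ∈ L := (EuclideanGeometry.orthogonalProjection L x).2
  have hLdist : Metric.infDist x (L : Set X) = dist x p := by
    refine le_antisymm (Metric.infDist_le_dist_of_mem hpL) ?_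
    rw [← not_lt, Metric.infDist_lt_iff ⟨p, hpL⟩]
    push_neg
    intro c hc
    have := EuclideanGeometry.dist_sq_eq_dist_orthogonalProjection_sq_add_dist_orthogonalProjection_sq
      (s := L) x hc
    simp only [← hp] at this
    rw [dist_comm c x, dist_comm c p] at this
    nlinarith [dist_nonneg (x := x) (y := p), dist_nonneg (x := x) (y := c),
      dist_nonneg (x := c) (y := p)]
  constructor
  · rw [hLdist]
    exact gDR_aux C hCne hCcl L hCL lam x
  · have h := gDR_aux C hCne hCcl L hCL 0 x
    simp only [sub_zero, one_smul, zero_smul, add_zero, one_pow, one_mul] at h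
    rw [hLdist]
    exact h
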